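/- Let H be a complex Hilbert space, ψ ∈ H a unit vector, and A₀, A₁, B₀, B₁, C₀, C₁ : H →L[ℂ] H bounded self-adjoint operators, each squaring to the identity, such that every Aᵢ commutes with every Bⱼ and every Cₖ, and every Bⱼ commutes with every Cₖ. Let d = re⟪ψ, (A₀B₀A₁B₁ + A₁B₁A₀B₀)ψ⟫ / 2 and e = re⟪ψ, (A₀B₁A₁B₀ + A₁B₀A₀B₁)ψ⟫ / 2. Then |re⟪ψ, (A₀B₀C₀ + A₁B₁C₀ + A₀B₁C₁ − A₁B₀C₁)ψ⟫| ≤ √(2(1 + d)) + √(2(1 − e)). -/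

import Mathlib

open ContinuousLinearMap in
lemma mermin_aux_norm_sq {H : Type*} [NormedAddCommGroup H] [InnerProductSpace ℂ H]
    [CompleteSpace H] (ψ : H) (X : H →L[ℂ] H) (hX : IsSelfAdjoint X) :
    ‖X ψ‖ ^ 2 = (inner ℂ ψ ((X * X) ψ) : ℂ).re := by
  have h : (inner ℂ ψ ((X * X) ψ) : ℂ) = inner ℂ (X ψ) (X ψ) := by
    rw [ContinuousLinearMap.mul_apply, ← ContinuousLinearMap.adjoint_inner_left,
      hX.adjoint_eq]
  rw [h, inner_self_eq_norm_sq_to_K]; norm_cast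

open ContinuousLinearMap in
lemma mermin_aux_key {H : Type*} [NormedAddCommGroup H] [InnerProductSpace ℂ H]
    [CompleteSpace H] (ψ : H) (hψ : ‖ψ‖ = 1) (X C : H →L[ℂ] H)
    (hX : IsSelfAdjoint X) (hC : IsSelfAdjoint C) (hC2 : C * C = 1) :
    |(inner ℂ ψ ((X * C) ψ) : ℂ).re| ≤ ‖X ψ‖ := by
  have hCnorm : ‖C ψ‖ = 1 := by
    have h1 : ‖C ψ‖ ^ 2 = (1:ℝ) := by
      have := mermin_aux_norm_sq ψ C hC
      rw [hC2] at this
      simp only [ContinuousLinearMap.one_apply] at this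
      rw [this, inner_self_eq_norm_sq_to_K, hψ]; norm_num
    nlinarith [norm_nonneg (C ψ)]
  have h : (inner ℂ ψ ((X * C) ψ) : ℂ) = inner ℂ (X ψ) (C ψ) := by
    rw [ContinuousLinearMap.mul_apply, ← ContinuousLinearMap.adjoint_inner_left,
      hX.adjoint_eq]
  calc |(inner ℂ ψ ((X * C) ψ) : ℂ).re| ≤ ‖(inner ℂ ψ ((X * C) ψ) : ℂ)‖ :=
        Complex.abs_re_le_norm _
    _ = ‖(inner ℂ (X ψ) (C ψ) : ℂ)‖ := by rw [h]
    _ ≤ ‖X ψ‖ * ‖C ψ‖ := norm_inner_le_norm _ _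
    _ = ‖X ψ‖ := by rw [hCnorm, mul_one]

/-- In the tripartite quantum scenario, the Mermin parameter is
bounded by `√(2(1 + d)) + √(2(1 - e))` where `d = ⟨{A₀B₀, A₁B₁}⟩/2` and
`e = ⟨{A₀B₁, A₁B₀}⟩/2`. -/
theorem mermin_anticommutator_bound
    {H : Type*} [NormedAddCommGroup H] [InnerProductSpace ℂ H] [CompleteSpace H]
    (ψ : H) (hψ : ‖ψ‖ = 1)
    (A₀ A₁ B₀ B₁ C₀ C₁ : H →L[ℂ] H)
    (hsa : ∀ X ∈ [A₀, A₁, B₀, B₁, C₀, C₁], IsSelfAdjoint X)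
    (hsq : ∀ X ∈ [A₀, A₁, B₀, B₁, C₀, C₁], X * X = 1)
    (hAB : ∀ i ∈ [A₀, A₁], ∀ j ∈ [B₀, B₁], i * j = j * i)
    (hAC : ∀ i ∈ [A₀, A₁], ∀ k ∈ [C₀, C₁], i * k = k * i)
    (hBC : ∀ j ∈ [B₀, B₁], ∀ k ∈ [C₀, C₁], j * k = k * j)
    (d e : ℝ)
    (hd : d = (inner ℂ ψ ((A₀ * B₀ * (A₁ * B₁) + A₁ * B₁ * (A₀ * B₀)) ψ) : ℂ).re / 2)
    (he : e = (inner ℂ ψ ((A₀ * B₁ * (A₁ * B₀) + A₁ * B₀ * (A₀ * B₁)) ψ) : ℂ).re / 2) :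
    |(inner ℂ ψ ((A₀ * B₀ * C₀ + A₁ * B₁ * C₀ + A₀ * B₁ * C₁ - A₁ * B₀ * C₁) ψ) : ℂ).re| ≤
      Real.sqrt (2 * (1 + d)) + Real.sqrt (2 * (1 - e)) := by
  have sA0 : IsSelfAdjoint A₀ := hsa A₀ (by simp)
  have sA1 : IsSelfAdjoint A₁ := hsa A₁ (by simp)
  have sB0 : IsSelfAdjoint B₀ := hsa B₀ (by simp)
  have sB1 : IsSelfAdjoint B₁ := hsa B₁ (by simp)
  have sC0 : IsSelfAdjoint C₀ := hsa C₀ (by simp)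
  have sC1 : IsSelfAdjoint C₁ := hsa C₁ (by simp)
  have qA0 : A₀ * A₀ = 1 := hsq A₀ (by simp)
  have qA1 : A₁ * A₁ = 1 := hsq A₁ (by simp)
  have qB0 : B₀ * B₀ = 1 := hsq B₀ (by simp)
  have qB1 : B₁ * B₁ = 1 := hsq B₁ (by simp)
  have qC0 : C₀ * C₀ = 1 := hsq C₀ (by simp)
  have qC1 : C₁ * C₁ = 1 := hsq C₁ (by simp)
  have c00 : A₀ * B₀ = B₀ * A₀ := hAB A₀ (by simp) B₀ (by simp)
  have c01 : A₀ * B₁ = B₁ * A₀ := hAB A₀ (by simp) B₁ (by simp)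
  have c10 : A₁ * B₀ = B₀ * A₁ := hAB A₁ (by simp) B₀ (by simp)
  have c11 : A₁ * B₁ = B₁ * A₁ := hAB A₁ (by simp) B₁ (by simp)
  set X := A₀ * B₀ + A₁ * B₁ with hXdef
  set Y := A₀ * B₁ - A₁ * B₀ with hYdef
  have hXsa : IsSelfAdjoint X := by
    have h1 : IsSelfAdjoint (A₀ * B₀) := by
      rw [IsSelfAdjoint, star_mul, sB0.star_eq, sA0.star_eq, ← c00]
    have h2 : IsSelfAdjoint (A₁ * B₁) := by
      rw [IsSelfAdjoint, star_mul, sB1.star_eq, sA1.star_eq, ← c11]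
    exact h1.add h2
  have hYsa : IsSelfAdjoint Y := by
    have h1 : IsSelfAdjoint (A₀ * B₁) := by
      rw [IsSelfAdjoint, star_mul, sB1.star_eq, sA0.star_eq, ← c01]
    have h2 : IsSelfAdjoint (A₁ * B₀) := by
      rw [IsSelfAdjoint, star_mul, sB0.star_eq, sA1.star_eq, ← c10]
    exact h1.sub h2
  -- squares
  have hP2 : (A₀ * B₀) * (A₀ * B₀) = 1 := by
    calc (A₀ * B₀) * (A₀ * B₀) = A₀ * (B₀ * A₀) * B₀ := by noncomm_ring
      _ = A₀ * (A₀ * B₀) * B₀ := by rw [← c00]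
      _ = (A₀ * A₀) * (B₀ * B₀) := by noncomm_ring
      _ = 1 := by rw [qA0, qB0, mul_one]
  have hQ2 : (A₁ * B₁) * (A₁ * B₁) = 1 := by
    calc (A₁ * B₁) * (A₁ * B₁) = A₁ * (B₁ * A₁) * B₁ := by noncomm_ring
      _ = A₁ * (A₁ * B₁) * B₁ := by rw [← c11]
      _ = (A₁ * A₁) * (B₁ * B₁) := by noncomm_ring
      _ = 1 := by rw [qA1, qB1, mul_one]
  have hR2 : (A₀ * B₁) * (A₀ * B₁) = 1 := by
    calc (A₀ * B₁) * (A₀ * B₁) = A₀ * (B₁ * A₀) * B₁ := by noncomm_ring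
      _ = A₀ * (A₀ * B₁) * B₁ := by rw [← c01]
      _ = (A₀ * A₀) * (B₁ * B₁) := by noncomm_ring
      _ = 1 := by rw [qA0, qB1, mul_one]
  have hS2 : (A₁ * B₀) * (A₁ * B₀) = 1 := by
    calc (A₁ * B₀) * (A₁ * B₀) = A₁ * (B₀ * A₁) * B₀ := by noncomm_ring
      _ = A₁ * (A₁ * B₀) * B₀ := by rw [← c10]
      _ = (A₁ * A₁) * (B₀ * B₀) := by noncomm_ring
      _ = 1 := by rw [qA1, qB0, mul_one]
  have hXX : X * X = 1 + (A₀ * B₀ * (A₁ * B₁) + A₁ * B₁ * (A₀ * B₀)) + 1 := by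
    rw [hXdef]
    rw [add_mul, mul_add, mul_add, hP2, hQ2]
    noncomm_ring
  have hYY : Y * Y = (1 + 1) - (A₀ * B₁ * (A₁ * B₀) + A₁ * B₀ * (A₀ * B₁)) := by
    rw [hYdef]
    rw [sub_mul, mul_sub, mul_sub, hR2, hS2]
    noncomm_ring
  have hψ2 : (inner ℂ ψ ((1 : H →L[ℂ] H) ψ) : ℂ).re = 1 := by
    simp only [ContinuousLinearMap.one_apply]
    rw [inner_self_eq_norm_sq_to_K, hψ]; norm_num
  have hXnorm : ‖X ψ‖ ^ 2 = 2 * (1 + d) := by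
    rw [mermin_aux_norm_sq ψ X hXsa, hXX, hd]
    simp only [ContinuousLinearMap.add_apply, inner_add_right, Complex.add_re]
    rw [show (inner ℂ ψ ((1 : H →L[ℂ] H) ψ) : ℂ).re = 1 from hψ2]
    ring
  have hYnorm : ‖Y ψ‖ ^ 2 = 2 * (1 - e) := by
    rw [mermin_aux_norm_sq ψ Y hYsa, hYY, he]
    simp only [ContinuousLinearMap.add_apply, ContinuousLinearMap.sub_apply,
      inner_add_right, inner_sub_right, Complex.add_re, Complex.sub_re]
    rw [show (inner ℂ ψ ((1 : H →L[ℂ] H) ψ) : ℂ).re = 1 from hψ2]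
    ring
  have hXs : ‖X ψ‖ = Real.sqrt (2 * (1 + d)) := by
    rw [← hXnorm, Real.sqrt_sq (norm_nonneg _)]
  have hYs : ‖Y ψ‖ = Real.sqrt (2 * (1 - e)) := by
    rw [← hYnorm, Real.sqrt_sq (norm_nonneg _)]
  have hM : A₀ * B₀ * C₀ + A₁ * B₁ * C₀ + A₀ * B₁ * C₁ - A₁ * B₀ * C₁
      = X * C₀ + Y * C₁ := by rw [hXdef, hYdef]; noncomm_ring
  rw [hM]
  have hsplit : (inner ℂ ψ ((X * C₀ + Y * C₁) ψ) : ℂ).re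
      = (inner ℂ ψ ((X * C₀) ψ) : ℂ).re + (inner ℂ ψ ((Y * C₁) ψ) : ℂ).re := by
    simp [inner_add_right]
  rw [hsplit]
  calc |(inner ℂ ψ ((X * C₀) ψ) : ℂ).re + (inner ℂ ψ ((Y * C₁) ψ) : ℂ).re|
      ≤ |(inner ℂ ψ ((X * C₀) ψ) : ℂ).re| + |(inner ℂ ψ ((Y * C₁) ψ) : ℂ).re| := abs_add_le _ _
    _ ≤ ‖X ψ‖ + ‖Y ψ‖ :=
        add_le_add (mermin_aux_key ψ hψ X C₀ hXsa sC0 qC0)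
          (mermin_aux_key ψ hψ Y C₁ hYsa sC1 qC1)
    _ = Real.sqrt (2 * (1 + d)) + Real.sqrt (2 * (1 - e)) := by rw [hXs, hYs]
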